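/- Let X = (ℤ/2ℤ)³ and define a 4-coloured graph γ on X by setting, for distinct x, y ∈ X: γ({x,y}) = 1 if x + y = (1,0,0), γ({x,y}) = 2 if x + y = (0,1,0), γ({x,y}) = 3 if x + y = (0,0,1), and γ({x,y}) = 0 otherwise. Then Aut(γ) = { t_g : g ∈ (ℤ/2ℤ)³ }, the group of all translations t_g : x ↦ x + g of (ℤ/2ℤ)³. -/

import Mathlib

/-- `A` is precisely the automorphism group of the `k`-coloured graph `γ` on `X`. -/
def IsColGraphAutGroup {X : Type*} {k : ℕ} (γ : Sym2 X → Fin k)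
    (A : Subgroup (Equiv.Perm X)) : Prop :=
  ∀ σ : Equiv.Perm X, σ ∈ A ↔ ∀ x y : X, x ≠ y → γ s(σ x, σ y) = γ s(x, y)

/-- The regular permutation group of a finite abelian group `G`: the subgroup of
`Sym(G)` consisting of all translations `t_g : x ↦ x + g`. -/
def translations (G : Type*) [AddCommGroup G] : Subgroup (Equiv.Perm G) where
  carrier := {σ | ∃ g : G, σ = Equiv.addRight g}
  one_mem' := ⟨0, by ext x; simp⟩
  mul_mem' := by
    rintro σ τ ⟨g, rfl⟩ ⟨h, rfl⟩
    exact ⟨h + g, by ext x; simp [add_assoc]⟩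
  inv_mem' := by
    rintro σ ⟨g, rfl⟩
    exact ⟨-g, by ext x; simp⟩

/-- The 4-coloured graph on `(ℤ/2ℤ)³` colouring `{x,y}` by `1` if `x + y = (1,0,0)`,
by `2` if `x + y = (0,1,0)`, by `3` if `x + y = (0,0,1)`, and by `0` otherwise. -/
def gamma16 : Sym2 (ZMod 2 × ZMod 2 × ZMod 2) → Fin 4 :=
  Sym2.lift ⟨fun x y =>
    if x + y = ((1 : ZMod 2), (0 : ZMod 2), (0 : ZMod 2)) then 1
    else if x + y = ((0 : ZMod 2), (1 : ZMod 2), (0 : ZMod 2)) then 2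
    else if x + y = ((0 : ZMod 2), (0 : ZMod 2), (1 : ZMod 2)) then 3
    else 0,
    fun x y => by dsimp only; rw [add_comm]⟩

abbrev X3 := ZMod 2 × ZMod 2 × ZMod 2

def col16 : X3 → Fin 4 := fun v =>
  if v = ((1 : ZMod 2), (0 : ZMod 2), (0 : ZMod 2)) then 1
  else if v = ((0 : ZMod 2), (1 : ZMod 2), (0 : ZMod 2)) then 2
  else if v = ((0 : ZMod 2), (0 : ZMod 2), (1 : ZMod 2)) then 3
  else 0

lemma gamma16_eq (a b : X3) : gamma16 s(a, b) = col16 (a + b) := rfl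

lemma addself (a : X3) : a + a = 0 := by
  rcases a with ⟨a, b, c⟩
  simp [Prod.ext_iff, CharTwo.add_self_eq_zero]

lemma col16_inj (v e : X3)
    (he : e = (1,0,0) ∨ e = (0,1,0) ∨ e = (0,0,1))
    (h : col16 v = col16 e) : v = e := by
  revert h; revert he; revert e; revert v; decide


/-- The automorphism group of the above 4-coloured graph on `(ℤ/2ℤ)³` is exactly the
group of translations of `(ℤ/2ℤ)³`. -/
theorem statement16 :
    IsColGraphAutGroup gamma16 (translations (ZMod 2 × ZMod 2 × ZMod 2)) := by
  intro σ
  constructor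
  · rintro ⟨g, rfl⟩ x y hxy
    rw [gamma16_eq, gamma16_eq]
    congr 1
    show (x + g) + (y + g) = x + y
    rw [add_add_add_comm, addself, add_zero]
  · intro h
    have step : ∀ x e : X3, (e = (1,0,0) ∨ e = (0,1,0) ∨ e = (0,0,1)) →
        σ (x + e) = σ x + e := by
      intro x e he
      have hne : x ≠ x + e := by
        rw [ne_eq, left_eq_add]
        rcases he with rfl | rfl | rfl <;> decide
      have hcol := h x (x + e) hne
      rw [gamma16_eq, gamma16_eq] at hcol
      have hxe : x + (x + e) = e := by rw [← add_assoc, addself, zero_add]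
      rw [hxe] at hcol
      have := col16_inj _ _ he hcol
      have h2 : σ x + (σ x + σ (x + e)) = σ x + e := by rw [this]
      rwa [← add_assoc, addself, zero_add] at h2
    refine ⟨σ 0, ?_⟩
    have h1 : ∀ x : X3, σ (x + (1,0,0)) = σ x + (1,0,0) := fun x => step x _ (Or.inl rfl)
    have h2 : ∀ x : X3, σ (x + (0,1,0)) = σ x + (0,1,0) := fun x => step x _ (Or.inr (Or.inl rfl))
    have h3 : ∀ x : X3, σ (x + (0,0,1)) = σ x + (0,0,1) := fun x => step x _ (Or.inr (Or.inr rfl))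
    have hx : ∀ x : X3, σ x = x + σ 0 := by
      have e100 : σ (1,0,0) = σ 0 + (1,0,0) := by
        have := h1 0; rwa [show (0 : X3) + (1,0,0) = (1,0,0) by decide] at this
      have e010 : σ (0,1,0) = σ 0 + (0,1,0) := by
        have := h2 0; rwa [show (0 : X3) + (0,1,0) = (0,1,0) by decide] at this
      have e001 : σ (0,0,1) = σ 0 + (0,0,1) := by
        have := h3 0; rwa [show (0 : X3) + (0,0,1) = (0,0,1) by decide] at this
      have e110 : σ (1,1,0) = σ 0 + (1,1,0) := by
        have := h2 (1,0,0)
        rw [show ((1,0,0) : X3) + (0,1,0) = (1,1,0) by decide, e100, add_assoc] at this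
        rwa [show ((1,0,0) : X3) + (0,1,0) = (1,1,0) by decide] at this
      have e101 : σ (1,0,1) = σ 0 + (1,0,1) := by
        have := h3 (1,0,0)
        rw [show ((1,0,0) : X3) + (0,0,1) = (1,0,1) by decide, e100, add_assoc] at this
        rwa [show ((1,0,0) : X3) + (0,0,1) = (1,0,1) by decide] at this
      have e011 : σ (0,1,1) = σ 0 + (0,1,1) := by
        have := h3 (0,1,0)
        rw [show ((0,1,0) : X3) + (0,0,1) = (0,1,1) by decide, e010, add_assoc] at this
        rwa [show ((0,1,0) : X3) + (0,0,1) = (0,1,1) by decide] at this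
      have e111 : σ (1,1,1) = σ 0 + (1,1,1) := by
        have := h3 (1,1,0)
        rw [show ((1,1,0) : X3) + (0,0,1) = (1,1,1) by decide, e110, add_assoc] at this
        rwa [show ((1,1,0) : X3) + (0,0,1) = (1,1,1) by decide] at this
      intro x
      have hX : ∀ a : ZMod 2, a = 0 ∨ a = 1 := by decide
      rcases x with ⟨a, b, c⟩
      rcases hX a with rfl | rfl <;> rcases hX b with rfl | rfl <;> rcases hX c with rfl | rfl
      · show σ 0 = 0 + σ 0; rw [zero_add]
      · rw [e001, add_comm]
      · rw [e010, add_comm]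
      · rw [e011, add_comm]
      · rw [e100, add_comm]
      · rw [e101, add_comm]
      · rw [e110, add_comm]
      · rw [e111, add_comm]
    exact Equiv.ext hx
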